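/- arXiv:2012.09194 — 3 statements merged into one kernel-verified Lean document; each statement's English description precedes it below -/
import Mathlib

section
/- Let τ, ν be complex n×n matrices, X = ∑_{j,k,m} τ_{j,k} ν_{k,m} A_j† N_m A_k on the fermionic Fock space of n modes. Then the fermionic η-seminorm satisfies ‖X‖_η ≤ ‖τ‖ ‖ν‖_max η², where ‖τ‖ is the spectral norm of τ and ‖ν‖_max = max_{l,m}|ν_{l,m}|. -/
open Matrix
noncomputable section

/-- A fermionic occupation configuration on `n` modes. -/
abbrev Config (n : ℕ) := Fin n → Bool

/-- The fermionic Fock space on `n` modes. -/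
abbrev Fock (n : ℕ) := EuclideanSpace ℂ (Config n)

/-- Hamming weight (number of occupied modes) of a configuration. -/
def wt {n : ℕ} (c : Config n) : ℕ := (Finset.univ.filter fun k => c k = true).card

/-- The Jordan–Wigner sign `(-1)^{∑_{k<j} c_k}`. -/
def signFactor {n : ℕ} (j : Fin n) (c : Config n) : ℂ :=
  (-1 : ℂ) ^ ((Finset.univ.filter fun k => k < j ∧ c k = true).card)

/-- The fermionic creation operator `A_j†`, as a matrix in the occupation basis. -/
def createM {n : ℕ} (j : Fin n) : Matrix (Config n) (Config n) ℂ :=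
  Matrix.of fun c' c =>
    if c j = false ∧ c' = Function.update c j true then signFactor j c else 0

/-- The fermionic annihilation operator `A_j`, the Hermitian adjoint of `A_j†`. -/
def annM {n : ℕ} (j : Fin n) : Matrix (Config n) (Config n) ℂ := (createM j)ᴴ

/-- The occupation-number operator `N_j = A_j† A_j`. -/
def numM {n : ℕ} (j : Fin n) : Matrix (Config n) (Config n) ℂ := createM j * annM j

/-- The particle-number operator `N = ∑_j N_j`. -/
def totalNumM (n : ℕ) : Matrix (Config n) (Config n) ℂ := ∑ j, numM j

/-- Orthogonal projection `Π_η` onto the `η`-electron subspace. -/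
def projM (n η : ℕ) : Matrix (Config n) (Config n) ℂ :=
  Matrix.of fun c' c => if c' = c ∧ wt c = η then 1 else 0

/-- An operator is number-preserving iff it commutes with every `Π_η`. -/
def NumberPreserving {n : ℕ} (X : Matrix (Config n) (Config n) ℂ) : Prop :=
  ∀ η : ℕ, projM n η * X = X * projM n η

/-- Apply a matrix to a Fock-space vector, as a continuous linear map. -/
def appM {n : ℕ} (A : Matrix (Config n) (Config n) ℂ) : Fock n →L[ℂ] Fock n :=
  Matrix.toEuclideanCLM (𝕜 := ℂ) A

/-- Spectral norm of a matrix (operator norm on the Euclidean space). -/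
def specNorm {m : Type*} [Fintype m] [DecidableEq m] (A : Matrix m m ℂ) : ℝ :=
  ‖Matrix.toEuclideanCLM (𝕜 := ℂ) A‖

/-- The fermionic `η`-seminorm `‖X‖_η = ‖X Π_η‖`. -/
def fsem {n : ℕ} (η : ℕ) (X : Matrix (Config n) (Config n) ℂ) : ℝ :=
  specNorm (X * projM n η)

/-- Max-norm: largest matrix entry in absolute value. -/
def maxNorm {m : Type*} [Fintype m] (A : Matrix m m ℂ) : ℝ := ⨆ i, ⨆ j, ‖A i j‖

/-! ### Auxiliary lemmas -/

section Aux

variable {n : ℕ}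

lemma conj_signFactor (j : Fin n) (c : Config n) :
    (starRingEnd ℂ) (signFactor j c) = signFactor j c := by
  simp [signFactor, map_pow]

lemma conj_mul_signFactor (j : Fin n) (c : Config n) :
    (starRingEnd ℂ) (signFactor j c) * signFactor j c = 1 := by
  rw [conj_signFactor, signFactor, ← pow_add, ← two_mul, pow_mul]
  norm_num

lemma norm_signFactor (j : Fin n) (c : Config n) : ‖signFactor j c‖ = 1 := by
  simp [signFactor]

lemma annM_mulVec (k : Fin n) (ψ : Config n → ℂ) (c : Config n) :
    (annM k).mulVec ψ c =
      if c k = false then (starRingEnd ℂ) (signFactor k c) * ψ (Function.update c k true)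
      else 0 := by
  unfold annM createM Matrix.mulVec dotProduct
  simp only [conjTranspose_apply, of_apply]
  by_cases h : c k = false
  · rw [if_pos h, Finset.sum_eq_single (Function.update c k true)]
    · simp [h]
    · intro d _ hd; simp [h, hd]
    · simp
  · rw [if_neg h]
    apply Finset.sum_eq_zero; intro d _; simp [h]

lemma createM_mulVec (j : Fin n) (φ : Config n → ℂ) (c' : Config n) :
    (createM j).mulVec φ c' =
      if c' j = true then
        signFactor j (Function.update c' j false) * φ (Function.update c' j false) else 0 := by
  unfold createM Matrix.mulVec dotProduct
  simp only [of_apply]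
  by_cases h : c' j = true
  · rw [if_pos h, Finset.sum_eq_single (Function.update c' j false)]
    · have h1 : (Function.update c' j false) j = false := by simp
      have h2 : c' = Function.update (Function.update c' j false) j true := by
        rw [Function.update_idem]
        exact (Function.update_eq_self_iff.mpr h.symm).symm
      rw [if_pos ⟨h1, h2⟩]
    · intro d _ hd
      rw [mul_eq_zero]; left
      rw [ite_eq_right_iff]
      rintro ⟨hd1, hd2⟩
      refine absurd ?_ hd
      rw [hd2, Function.update_idem]
      exact (Function.update_eq_self_iff.mpr hd1.symm).symm
    · simp
  · rw [if_neg h]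
    apply Finset.sum_eq_zero; intro d _
    rw [mul_eq_zero]; left
    rw [ite_eq_right_iff]
    rintro ⟨hd1, hd2⟩
    exact absurd (by rw [hd2]; simp) h

lemma numM_mulVec (m : Fin n) (φ : Config n → ℂ) (c : Config n) :
    (numM m).mulVec φ c = if c m = true then φ c else 0 := by
  unfold numM
  rw [← Matrix.mulVec_mulVec, createM_mulVec]
  by_cases h : c m = true
  · rw [if_pos h, if_pos h, annM_mulVec]
    have h0 : (Function.update c m false) m = false := by simp
    rw [if_pos h0, Function.update_idem]
    have h2 : Function.update c m true = c := Function.update_eq_self_iff.mpr h.symm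
    rw [h2, ← mul_assoc, mul_comm (signFactor m _) _, conj_mul_signFactor, one_mul]
  · rw [if_neg h, if_neg h]

lemma projM_mulVec (η : ℕ) (ψ : Config n → ℂ) (c : Config n) :
    (projM n η).mulVec ψ c = if wt c = η then ψ c else 0 := by
  unfold projM Matrix.mulVec dotProduct
  simp only [of_apply]
  rw [Finset.sum_eq_single c]
  · by_cases h : wt c = η <;> simp [h]
  · intro d _ hd
    rw [mul_eq_zero]; left
    rw [ite_eq_right_iff]
    rintro ⟨h1, _⟩
    exact absurd h1.symm hd
  · simp

lemma wt_update_true {c : Config n} {k : Fin n} (h : c k = false) :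
    wt (Function.update c k true) = wt c + 1 := by
  unfold wt
  rw [show (Finset.univ.filter fun i => Function.update c k true i = true)
      = insert k (Finset.univ.filter fun i => c i = true) from ?_]
  · rw [Finset.card_insert_of_notMem (by simp [h])]
  · ext i
    by_cases hik : i = k
    · subst hik; simp
    · simp [Function.update_apply, hik]

lemma wt_update_false {c : Config n} {j : Fin n} (h : c j = true) :
    wt (Function.update c j false) + 1 = wt c := by
  have h0 : (Function.update c j false) j = false := by simp
  have := wt_update_true h0
  rw [Function.update_idem] at this
  rw [← this, Function.update_eq_self_iff.mpr h.symm]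

lemma flip_invol (j : Fin n) :
    Function.Involutive (fun c : Config n => Function.update c j (!(c j))) := by
  intro c
  ext i
  by_cases hij : i = j
  · subst hij; simp
  · simp [Function.update_apply, hij]

lemma sum_flip (j : Fin n) (f : Config n → ℝ) :
    ∑ c, f (Function.update c j (!(c j))) = ∑ c, f c :=
  Equiv.sum_comp ((flip_invol j).toPerm _) f

lemma ann_sq_sum (j : Fin n) (ψ : Config n → ℂ) :
    ∑ c, ‖(annM j).mulVec ψ c‖ ^ 2 = ∑ c, (if c j = true then ‖ψ c‖ ^ 2 else 0) := by
  rw [← sum_flip j (fun c => ‖(annM j).mulVec ψ c‖ ^ 2)]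
  apply Finset.sum_congr rfl
  intro c _
  rw [annM_mulVec]
  by_cases h : c j = true
  · have h1 : Function.update c j (!(c j)) j = false := by simp [h]
    rw [if_pos h1, if_pos h, Function.update_idem]
    have h2 : Function.update c j true = c := Function.update_eq_self_iff.mpr h.symm
    rw [h2, norm_mul, RCLike.norm_conj, norm_signFactor, one_mul]
  · have hcf : c j = false := by simpa using h
    have h1 : Function.update c j (!(c j)) j = true := by simp [hcf]
    rw [if_neg (by rw [h1]; simp), if_neg h, norm_zero]
    norm_num

lemma total_ann_sq (ψ : Config n → ℂ) :
    ∑ j, ∑ c, ‖(annM j).mulVec ψ c‖ ^ 2 = ∑ c, (wt c : ℝ) * ‖ψ c‖ ^ 2 := by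
  rw [Finset.sum_congr rfl (fun j _ => ann_sq_sum j ψ), Finset.sum_comm]
  apply Finset.sum_congr rfl
  intro c _
  rw [Finset.sum_ite, Finset.sum_const, Finset.sum_const_zero, add_zero,
    nsmul_eq_mul, wt]

lemma conj_dot_mulVec {α : Type*} [Fintype α] (A : Matrix α α ℂ) (φ ψ : α → ℂ) :
    ∑ c, (starRingEnd ℂ) (φ c) * (A.mulVec ψ) c
      = ∑ c, (starRingEnd ℂ) ((Aᴴ.mulVec φ) c) * ψ c := by
  simp only [Matrix.mulVec, dotProduct, conjTranspose_apply, map_sum, _root_.map_mul,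
    Finset.mul_sum, Finset.sum_mul, Complex.star_def, Complex.conj_conj]
  rw [Finset.sum_comm]
  apply Finset.sum_congr rfl; intro c _
  apply Finset.sum_congr rfl; intro d _
  ring

end Aux

lemma sum_mulVec_apply {α ι : Type*} [Fintype α] [Fintype ι] (s : Finset ι)
    (A : ι → Matrix α α ℂ) (x : α → ℂ) (c : α) :
    ((∑ i ∈ s, A i) *ᵥ x) c = ∑ i ∈ s, (A i *ᵥ x) c := by
  simp only [Matrix.mulVec, dotProduct, Finset.sum_apply, Matrix.sum_apply, Finset.sum_mul]
  exact Finset.sum_comm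

set_option maxHeartbeats 1000000 in
/-- **Seminorm bound for `∑_{j,k,m} τ_{j,k} ν_{k,m} A_j† N_m A_k`:**
`‖X‖_η ≤ ‖τ‖ ‖ν‖_max η²`. -/
theorem fsem_bound_first_term {n η : ℕ}
    (τ ν : Matrix (Fin n) (Fin n) ℂ) :
    fsem η (∑ j, ∑ k, ∑ m, (τ j k * ν k m) • (createM j * numM m * annM k)) ≤
      specNorm τ * maxNorm ν * (η : ℝ) ^ 2 := by
  classical
  rcases Nat.eq_zero_or_pos n with hn | hn
  · subst hn
    have hX : (∑ j : Fin 0, ∑ k, ∑ m, (τ j k * ν k m) • (createM j * numM m * annM k)) = 0 := by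
      simp
    rw [hX, fsem, specNorm, Matrix.zero_mul, map_zero, norm_zero,
      show maxNorm ν = 0 from Real.iSup_of_isEmpty _, mul_zero, zero_mul]
  · set X := (∑ j, ∑ k, ∑ m, (τ j k * ν k m) • (createM j * numM m * annM k)) with hXdef
    set Mn := maxNorm ν with hMndef
    have hτ0 : (0:ℝ) ≤ specNorm τ := norm_nonneg _
    have hνle : ∀ k m, ‖ν k m‖ ≤ Mn := by
      intro k m
      show ‖ν k m‖ ≤ ⨆ i, ⨆ j, ‖ν i j‖
      refine le_trans (le_ciSup (f := fun j => ‖ν k j‖) (Set.Finite.bddAbove (Set.finite_range _)) m) ?_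
      exact le_ciSup (f := fun i => ⨆ j, ‖ν i j‖) (Set.Finite.bddAbove (Set.finite_range _)) k
    obtain ⟨k0⟩ : Nonempty (Fin n) := Fin.pos_iff_nonempty.mp hn
    have hMn0 : 0 ≤ Mn := le_trans (norm_nonneg (ν k0 k0)) (hνle k0 k0)
    set C : ℝ := specNorm τ * Mn * (η:ℝ)^2 with hCdef
    have hC0 : 0 ≤ C := mul_nonneg (mul_nonneg hτ0 hMn0) (by positivity)
    rw [fsem, specNorm]
    refine ContinuousLinearMap.opNorm_le_bound _ hC0 (fun ψ => ?_)
    set ψ' : Config n → ℂ := (projM n η).mulVec ψ with hψ'def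
    set v : Config n → ℂ := X.mulVec ψ' with hvdef
    set w : Fin n → Config n → ℂ := fun k => (annM k).mulVec ψ' with hwdef
    set u : Fin n → Config n → ℂ := fun j => (annM j).mulVec v with hudef
    set s : Fin n → Config n → ℂ :=
      fun k c => ∑ m ∈ Finset.univ.filter (fun m => c m = true), ν k m with hsdef
    set z : Fin n → Config n → ℂ := fun k c => s k c * w k c with hzdef
    set U : Config n → EuclideanSpace ℂ (Fin n) := fun c => WithLp.toLp 2 (fun j => u j c) with hUdef
    set Z : Config n → EuclideanSpace ℂ (Fin n) := fun c => WithLp.toLp 2 (fun k => z k c) with hZdef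
    have happly : ∀ c, (toEuclideanCLM (𝕜 := ℂ) (X * projM n η)) ψ c = v c := by
      intro c
      show ((X * projM n η) *ᵥ ψ) c = v c
      rw [← Matrix.mulVec_mulVec, hvdef, hψ'def]
    have hψ'supp : ∀ c, wt c ≠ η → ψ' c = 0 := by
      intro c h
      rw [hψ'def, projM_mulVec, if_neg h]
    have hψ'le : ∀ c, ‖ψ' c‖ ≤ ‖ψ c‖ := by
      intro c
      rw [hψ'def, projM_mulVec]
      split_ifs
      · exact le_rfl
      · rw [norm_zero]; exact norm_nonneg _
    have hvterm : ∀ c, v c = ∑ j, ∑ k, ∑ m, (τ j k * ν k m) *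
        ((createM j).mulVec ((numM m).mulVec (w k)) c) := by
      intro c
      rw [hvdef, hXdef, sum_mulVec_apply]
      refine Finset.sum_congr rfl fun j _ => ?_
      rw [sum_mulVec_apply]
      refine Finset.sum_congr rfl fun k _ => ?_
      rw [sum_mulVec_apply]
      refine Finset.sum_congr rfl fun m _ => ?_
      rw [smul_mulVec, Pi.smul_apply, smul_eq_mul, ← Matrix.mulVec_mulVec,
        ← Matrix.mulVec_mulVec, hwdef]
    have hwsupp : ∀ k c, w k c ≠ 0 → wt c + 1 = η := by
      intro k c hwc
      rw [hwdef] at hwc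
      simp only at hwc
      rw [annM_mulVec] at hwc
      by_cases hck : c k = false
      · rw [if_pos hck] at hwc
        have hψne : ψ' (Function.update c k true) ≠ 0 := by
          intro h0; exact hwc (by rw [h0, mul_zero])
        have hwteq : wt (Function.update c k true) = η := by
          by_contra hne; exact hψne (hψ'supp _ hne)
        rw [← hwteq, wt_update_true hck]
      · rw [if_neg hck] at hwc; exact absurd rfl hwc
    have hvsupp : ∀ c, wt c ≠ η → v c = 0 := by
      intro c hc
      rw [hvterm]
      refine Finset.sum_eq_zero fun j _ => Finset.sum_eq_zero fun k _ =>
        Finset.sum_eq_zero fun m _ => ?_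
      rw [createM_mulVec]
      by_cases hcj : c j = true
      · rw [if_pos hcj, numM_mulVec]
        by_cases hm : (Function.update c j false) m = true
        · rw [if_pos hm]
          have hw0 : w k (Function.update c j false) = 0 := by
            by_contra hne
            have h1 := hwsupp k _ hne
            rw [wt_update_false hcj] at h1
            exact hc h1
          rw [hw0, mul_zero, mul_zero]
        · rw [if_neg hm, mul_zero, mul_zero]
      · rw [if_neg hcj, mul_zero]
    -- the key algebraic identity
    have hinner : ∀ c, (inner ℂ (U c) ((toEuclideanCLM (𝕜 := ℂ) τ) (Z c)) : ℂ)
        = ∑ j, (starRingEnd ℂ) (u j c) * ∑ k, τ j k * z k c := by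
      intro c
      simp only [PiLp.inner_apply, RCLike.inner_apply]
      exact Finset.sum_congr rfl fun j _ => mul_comm _ _
    have hkey : ∑ c, (starRingEnd ℂ) (v c) * v c
        = ∑ c, (inner ℂ (U c) ((toEuclideanCLM (𝕜 := ℂ) τ) (Z c)) : ℂ) := by
      have step1 : ∑ c, (starRingEnd ℂ) (v c) * v c
          = ∑ j, ∑ k, ∑ m, (τ j k * ν k m) *
            ∑ c, (starRingEnd ℂ) (v c) * ((createM j).mulVec ((numM m).mulVec (w k)) c) := by
        calc ∑ c, (starRingEnd ℂ) (v c) * v c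
            = ∑ c, ∑ j, ∑ k, ∑ m, (τ j k * ν k m) *
              ((starRingEnd ℂ) (v c) * ((createM j).mulVec ((numM m).mulVec (w k)) c)) := by
              refine Finset.sum_congr rfl fun c _ => ?_
              nth_rewrite 2 [hvterm c]
              simp only [Finset.mul_sum]
              exact Finset.sum_congr rfl fun j _ => Finset.sum_congr rfl fun k _ =>
                Finset.sum_congr rfl fun m _ => by ring
          _ = _ := by
              rw [Finset.sum_comm]
              refine Finset.sum_congr rfl fun j _ => ?_
              rw [Finset.sum_comm]
              refine Finset.sum_congr rfl fun k _ => ?_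
              rw [Finset.sum_comm]
              refine Finset.sum_congr rfl fun m _ => ?_
              rw [← Finset.mul_sum]
      have step2 : ∀ j k m, ∑ c, (starRingEnd ℂ) (v c) *
            ((createM j).mulVec ((numM m).mulVec (w k)) c)
          = ∑ c, (starRingEnd ℂ) (u j c) * (if c m = true then w k c else 0) := by
        intro j k m
        rw [conj_dot_mulVec (createM j) v ((numM m).mulVec (w k))]
        refine Finset.sum_congr rfl fun c _ => ?_
        rw [numM_mulVec]
        rfl
      have step3 : ∀ j k, ∑ m, (τ j k * ν k m) *
            ∑ c, (starRingEnd ℂ) (u j c) * (if c m = true then w k c else 0)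
          = ∑ c, τ j k * ((starRingEnd ℂ) (u j c) * z k c) := by
        intro j k
        calc ∑ m, (τ j k * ν k m) *
              ∑ c, (starRingEnd ℂ) (u j c) * (if c m = true then w k c else 0)
            = ∑ m, ∑ c, (τ j k) * ((starRingEnd ℂ) (u j c) *
                (if c m = true then ν k m * w k c else 0)) := by
              refine Finset.sum_congr rfl fun m _ => ?_
              rw [Finset.mul_sum]
              refine Finset.sum_congr rfl fun c _ => ?_
              split_ifs <;> ring
          _ = ∑ c, ∑ m, (τ j k) * ((starRingEnd ℂ) (u j c) *
                (if c m = true then ν k m * w k c else 0)) := Finset.sum_comm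
          _ = ∑ c, τ j k * ((starRingEnd ℂ) (u j c) * z k c) := by
              refine Finset.sum_congr rfl fun c _ => ?_
              rw [← Finset.mul_sum, ← Finset.mul_sum, Finset.sum_ite,
                Finset.sum_const_zero, add_zero, ← Finset.sum_mul]
      rw [step1]
      calc ∑ j, ∑ k, ∑ m, (τ j k * ν k m) *
            ∑ c, (starRingEnd ℂ) (v c) * ((createM j).mulVec ((numM m).mulVec (w k)) c)
          = ∑ j, ∑ k, ∑ c, τ j k * ((starRingEnd ℂ) (u j c) * z k c) := by
            refine Finset.sum_congr rfl fun j _ => Finset.sum_congr rfl fun k _ => ?_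
            rw [← step3 j k]
            exact Finset.sum_congr rfl fun m _ => by rw [step2 j k m]
        _ = ∑ c, ∑ j, ∑ k, τ j k * ((starRingEnd ℂ) (u j c) * z k c) := by
            rw [show (∑ j, ∑ k, ∑ c, τ j k * ((starRingEnd ℂ) (u j c) * z k c))
                = ∑ j, ∑ c, ∑ k, τ j k * ((starRingEnd ℂ) (u j c) * z k c) from
              Finset.sum_congr rfl fun j _ => Finset.sum_comm, Finset.sum_comm]
        _ = ∑ c, (inner ℂ (U c) ((toEuclideanCLM (𝕜 := ℂ) τ) (Z c)) : ℂ) := by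
            refine Finset.sum_congr rfl fun c _ => ?_
            rw [hinner c]
            refine (Finset.sum_congr rfl fun j _ => ?_).symm
            rw [Finset.mul_sum]
            exact Finset.sum_congr rfl fun k _ => by ring
    -- analytic part
    set a := Real.sqrt (∑ c, ‖v c‖^2) with hadef
    set b := Real.sqrt (∑ c, ‖ψ' c‖^2) with hbdef
    have hva : ∑ c, ‖v c‖^2 = a^2 :=
      (Real.sq_sqrt (Finset.sum_nonneg fun c _ => sq_nonneg _)).symm
    have hvb : ∑ c, ‖ψ' c‖^2 = b^2 :=
      (Real.sq_sqrt (Finset.sum_nonneg fun c _ => sq_nonneg _)).symm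
    have ha0 : 0 ≤ a := Real.sqrt_nonneg _
    have hb0 : 0 ≤ b := Real.sqrt_nonneg _
    have hU2 : ∑ c, ‖U c‖^2 = η * a^2 := by
      have hUc : ∀ c : Config n, ‖U c‖^2 = ∑ j, ‖u j c‖^2 := by
        intro c
        rw [EuclideanSpace.norm_eq, Real.sq_sqrt (Finset.sum_nonneg fun j _ => sq_nonneg _)]
      have hwtv : ∀ c : Config n, (wt c:ℝ) * ‖v c‖^2 = (η:ℝ) * ‖v c‖^2 := by
        intro c
        by_cases hwc : wt c = η
        · rw [hwc]
        · rw [hvsupp c hwc, norm_zero]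
          ring
      rw [Finset.sum_congr rfl fun c _ => hUc c, Finset.sum_comm,
        show ∑ j, ∑ c, ‖u j c‖^2 = ∑ c, (wt c : ℝ) * ‖v c‖^2 from total_ann_sq v,
        Finset.sum_congr rfl fun c _ => hwtv c, ← Finset.mul_sum, hva]
    have hzb : ∀ k c, ‖z k c‖ ≤ (Mn * η) * ‖w k c‖ := by
      intro k c
      by_cases hwc : w k c = 0
      · rw [hzdef]
        simp only [hwc, mul_zero, norm_zero]
        exact le_rfl
      · have hwt : wt c + 1 = η := hwsupp k c hwc
        have hwtle : (wt c : ℝ) ≤ (η:ℝ) := by exact_mod_cast (by omega : wt c ≤ η)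
        have hsb : ‖s k c‖ ≤ Mn * η := by
          rw [hsdef]
          refine le_trans (norm_sum_le _ _) ?_
          calc ∑ m ∈ Finset.univ.filter (fun m => c m = true), ‖ν k m‖
              ≤ ∑ m ∈ Finset.univ.filter (fun m => c m = true), Mn :=
                Finset.sum_le_sum fun m _ => hνle k m
            _ = (wt c : ℝ) * Mn := by rw [Finset.sum_const, nsmul_eq_mul, wt]
            _ ≤ (η:ℝ) * Mn := mul_le_mul_of_nonneg_right hwtle hMn0
            _ = Mn * η := mul_comm _ _
        rw [hzdef]
        simp only [norm_mul]
        exact mul_le_mul_of_nonneg_right hsb (norm_nonneg _)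
    have hZ2 : ∑ c, ‖Z c‖^2 ≤ (Mn*η)^2 * ((η:ℝ) * b^2) := by
      have hZc : ∀ c : Config n, ‖Z c‖^2 = ∑ k, ‖z k c‖^2 := by
        intro c
        rw [EuclideanSpace.norm_eq, Real.sq_sqrt (Finset.sum_nonneg fun k _ => sq_nonneg _)]
      calc ∑ c, ‖Z c‖^2 = ∑ c, ∑ k, ‖z k c‖^2 := Finset.sum_congr rfl fun c _ => hZc c
        _ = ∑ k, ∑ c, ‖z k c‖^2 := Finset.sum_comm
        _ ≤ ∑ k, ∑ c, (Mn*η)^2 * ‖w k c‖^2 := by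
            refine Finset.sum_le_sum fun k _ => Finset.sum_le_sum fun c _ => ?_
            have := pow_le_pow_left₀ (norm_nonneg _) (hzb k c) 2
            calc ‖z k c‖^2 ≤ ((Mn * η) * ‖w k c‖)^2 := this
              _ = (Mn*η)^2 * ‖w k c‖^2 := by ring
        _ = (Mn*η)^2 * ∑ k, ∑ c, ‖w k c‖^2 := by
            rw [Finset.mul_sum]
            exact Finset.sum_congr rfl fun k _ => by rw [Finset.mul_sum]
        _ = (Mn*η)^2 * ∑ c, (wt c : ℝ) * ‖ψ' c‖^2 := by
            rw [show ∑ k, ∑ c, ‖w k c‖^2 = ∑ c, (wt c : ℝ) * ‖ψ' c‖^2 from total_ann_sq ψ']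
        _ ≤ (Mn*η)^2 * ((η:ℝ) * b^2) := by
            refine mul_le_mul_of_nonneg_left ?_ (sq_nonneg _)
            rw [← hvb, Finset.mul_sum]
            refine Finset.sum_le_sum fun c _ => ?_
            by_cases hwc : wt c = η
            · rw [hwc]
            · rw [hψ'supp c hwc, norm_zero]
              simp
    have hCS : ∑ c, ‖U c‖ * ‖Z c‖ ≤ Real.sqrt (∑ c, ‖U c‖^2) * Real.sqrt (∑ c, ‖Z c‖^2) := by
      have h2 := Finset.sum_mul_sq_le_sq_mul_sq Finset.univ (fun c => ‖U c‖) (fun c => ‖Z c‖)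
      have hfg : 0 ≤ ∑ c, ‖U c‖ * ‖Z c‖ :=
        Finset.sum_nonneg fun c _ => mul_nonneg (norm_nonneg _) (norm_nonneg _)
      calc ∑ c, ‖U c‖ * ‖Z c‖ = Real.sqrt ((∑ c, ‖U c‖ * ‖Z c‖)^2) := (Real.sqrt_sq hfg).symm
        _ ≤ Real.sqrt ((∑ c, ‖U c‖^2) * (∑ c, ‖Z c‖^2)) := Real.sqrt_le_sqrt h2
        _ = _ := Real.sqrt_mul (Finset.sum_nonneg fun c _ => sq_nonneg _) _
    have hmain : a^2 ≤ C * (a * b) := by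
      have h0 : a^2 = ‖∑ c, (starRingEnd ℂ) (v c) * v c‖ := by
        rw [show ∑ c, (starRingEnd ℂ) (v c) * v c = ((∑ c, ‖v c‖^2 : ℝ) : ℂ) from ?_]
        · rw [Complex.norm_real, Real.norm_eq_abs,
            abs_of_nonneg (Finset.sum_nonneg fun c _ => sq_nonneg _), hva]
        · push_cast
          exact Finset.sum_congr rfl fun c _ => Complex.conj_mul' (v c)
      have h1 : Real.sqrt (∑ c, ‖U c‖^2) = Real.sqrt η * a := by
        rw [hU2, Real.sqrt_mul (Nat.cast_nonneg _), Real.sqrt_sq ha0]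
      have h2 : Real.sqrt (∑ c, ‖Z c‖^2) ≤ (Mn * η) * (Real.sqrt η * b) := by
        refine le_trans (Real.sqrt_le_sqrt hZ2) ?_
        rw [Real.sqrt_mul (sq_nonneg _), Real.sqrt_sq (mul_nonneg hMn0 (Nat.cast_nonneg _)),
          Real.sqrt_mul (Nat.cast_nonneg _), Real.sqrt_sq hb0]
      have hss : Real.sqrt η * Real.sqrt η = (η:ℝ) := Real.mul_self_sqrt (Nat.cast_nonneg _)
      rw [h0, hkey]
      calc ‖∑ c, (inner ℂ (U c) ((toEuclideanCLM (𝕜 := ℂ) τ) (Z c)) : ℂ)‖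
          ≤ ∑ c, ‖(inner ℂ (U c) ((toEuclideanCLM (𝕜 := ℂ) τ) (Z c)) : ℂ)‖ := norm_sum_le _ _
        _ ≤ ∑ c, ‖U c‖ * (specNorm τ * ‖Z c‖) := by
            refine Finset.sum_le_sum fun c _ => ?_
            refine le_trans (norm_inner_le_norm (𝕜 := ℂ) _ _) ?_
            exact mul_le_mul_of_nonneg_left (ContinuousLinearMap.le_opNorm _ _) (norm_nonneg _)
        _ = specNorm τ * ∑ c, ‖U c‖ * ‖Z c‖ := by
            rw [Finset.mul_sum]
            exact Finset.sum_congr rfl fun c _ => by ring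
        _ ≤ specNorm τ * (Real.sqrt (∑ c, ‖U c‖^2) * Real.sqrt (∑ c, ‖Z c‖^2)) :=
            mul_le_mul_of_nonneg_left hCS hτ0
        _ ≤ specNorm τ * ((Real.sqrt η * a) * ((Mn * η) * (Real.sqrt η * b))) := by
            refine mul_le_mul_of_nonneg_left ?_ hτ0
            rw [h1]
            exact mul_le_mul_of_nonneg_left h2 (mul_nonneg (Real.sqrt_nonneg _) ha0)
        _ = C * (a * b) := by
            rw [hCdef]
            linear_combination specNorm τ * Mn * (η:ℝ) * a * b * hss
    have hTψ : ‖(toEuclideanCLM (𝕜 := ℂ) (X * projM n η)) ψ‖ = a := by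
      rw [EuclideanSpace.norm_eq, hadef]
      congr 1
      exact Finset.sum_congr rfl fun c _ => by rw [happly c]
    have hble : b ≤ ‖ψ‖ := by
      have hsle : ∑ c, ‖ψ' c‖^2 ≤ ∑ c, ‖ψ c‖^2 :=
        Finset.sum_le_sum fun c _ => pow_le_pow_left₀ (norm_nonneg _) (hψ'le c) 2
      rw [hbdef, EuclideanSpace.norm_eq]
      exact Real.sqrt_le_sqrt hsle
    rw [hTψ]
    rcases eq_or_lt_of_le ha0 with h | h
    · rw [← h]
      exact mul_nonneg hC0 (norm_nonneg _)
    · have hsq : a * a ≤ (C * b) * a := by nlinarith [hmain]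
      have haC : a ≤ C * b := le_of_mul_le_mul_right hsq h
      exact le_trans haC (mul_le_mul_of_nonneg_left hble hC0)
end
end

section
/- Let τ, ν be complex n×n matrices and X = ∑_{j,k} τ_{j,k} ν_{k,k} A_j† A_k on the fermionic Fock space of n modes. Then ‖X‖_η ≤ ‖τ‖ ‖ν‖_max η, where ‖τ‖ is the spectral norm of τ, ‖ν‖_max = max_{l,m}|ν_{l,m}|, and ‖·‖_η is the fermionic η-seminorm. -/
open Matrix
noncomputable section

namespace FermiAux


variable {n : ℕ}

lemma norm_signFactor (j : Fin n) (c : Config n) : ‖signFactor j c‖ = 1 := by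
  simp [signFactor]

lemma wt_update_true {c : Config n} {j : Fin n} (h : c j = false) :
    wt (Function.update c j true) = wt c + 1 := by
  classical
  unfold wt
  have he : (Finset.univ.filter fun k => Function.update c j true k = true)
      = insert j (Finset.univ.filter fun k => c k = true) := by
    ext k
    by_cases hk : k = j <;> simp [Function.update_apply, hk]
  rw [he, Finset.card_insert_of_notMem (by simp [h])]

lemma ann_mulVec (k : Fin n) (φ : Config n → ℂ) (c' : Config n) :
    (annM k *ᵥ φ) c' =
      if c' k = false then (starRingEnd ℂ) (signFactor k c') * φ (Function.update c' k true)
      else 0 := by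
  classical
  simp only [annM, createM, mulVec, dotProduct, conjTranspose_apply, of_apply]
  by_cases h : c' k = false
  · rw [if_pos h, Finset.sum_eq_single (Function.update c' k true)]
    · rw [if_pos ⟨h, rfl⟩]; rfl
    · intro b _ hb
      rw [if_neg (by rintro ⟨-, rfl⟩; exact hb rfl), star_zero, zero_mul]
    · intro hmem; exact absurd (Finset.mem_univ _) hmem
  · rw [if_neg h]
    apply Finset.sum_eq_zero
    intro b _
    rw [if_neg (by rintro ⟨hc, -⟩; exact h hc), star_zero, zero_mul]

lemma sum_sq_ann (k : Fin n) (φ : Config n → ℂ) :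
    ∑ c', ‖(annM k *ᵥ φ) c'‖ ^ 2 = ∑ c, (if c k = true then ‖φ c‖ ^ 2 else 0) := by
  classical
  have h1 : ∀ c', ‖(annM k *ᵥ φ) c'‖ ^ 2 =
      if c' k = false then ‖φ (Function.update c' k true)‖ ^ 2 else 0 := by
    intro c'
    rw [ann_mulVec]
    split
    · rw [norm_mul, RCLike.norm_conj, norm_signFactor, one_mul]
    · simp
  simp only [h1]
  rw [← Finset.sum_filter, ← Finset.sum_filter]
  refine Finset.sum_nbij' (i := fun c => Function.update c k true)
    (j := fun c => Function.update c k false) ?_ ?_ ?_ ?_ ?_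
  · intro a ha; simp
  · intro a ha; simp
  · intro a ha
    simp only [Finset.mem_filter] at ha
    show Function.update (Function.update a k true) k false = a
    rw [Function.update_idem]
    exact Function.update_eq_self_iff.mpr ha.2.symm
  · intro a ha
    simp only [Finset.mem_filter] at ha
    show Function.update (Function.update a k false) k true = a
    rw [Function.update_idem]
    exact Function.update_eq_self_iff.mpr ha.2.symm
  · intro a _; rfl

lemma total_sum_sq (φ : Config n → ℂ) :
    ∑ k, ∑ c', ‖(annM k *ᵥ φ) c'‖ ^ 2 = ∑ c, (wt c : ℝ) * ‖φ c‖ ^ 2 := by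
  classical
  simp only [sum_sq_ann]
  rw [Finset.sum_comm]
  refine Finset.sum_congr rfl fun c _ => ?_
  rw [← Finset.sum_filter, Finset.sum_const, nsmul_eq_mul]
  rfl

lemma CA_entry_ne (j k : Fin n) {c' c : Config n} (h : wt c' ≠ wt c) :
    (createM j * annM k) c' c = 0 := by
  classical
  rw [Matrix.mul_apply]
  apply Finset.sum_eq_zero
  intro b _
  by_cases h2 : b k = false ∧ c = Function.update b k true
  · by_cases h1 : b j = false ∧ c' = Function.update b j true
    · exact absurd (by rw [h1.2, h2.2, wt_update_true h1.1, wt_update_true h2.1]) h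
    · have hz : createM j c' b = 0 := by
        simp only [createM, of_apply]; exact if_neg h1
      rw [hz, zero_mul]
  · have hz : annM k b c = 0 := by
      simp only [annM, conjTranspose_apply, createM, of_apply]
      rw [if_neg h2, star_zero]
    rw [hz, mul_zero]

lemma conj_dot_mulVec {α : Type*} [Fintype α] (M : Matrix α α ℂ) (a b : α → ℂ) :
    ∑ i, (starRingEnd ℂ) (a i) * (M *ᵥ b) i
      = ∑ i, (starRingEnd ℂ) ((Mᴴ *ᵥ a) i) * b i := by
  simp only [mulVec, dotProduct, conjTranspose_apply, map_sum, _root_.map_mul, Finset.mul_sum,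
    Finset.sum_mul, starRingEnd_apply, star_star, StarMul.star_mul]
  rw [Finset.sum_comm]
  exact Finset.sum_congr rfl fun i _ => Finset.sum_congr rfl fun j _ => by ring

lemma eud_norm_sq {ι : Type*} [Fintype ι] (x : EuclideanSpace ℂ ι) :
    ‖x‖ ^ 2 = ∑ i, ‖x i‖ ^ 2 := by
  rw [EuclideanSpace.norm_eq, Real.sq_sqrt (Finset.sum_nonneg fun i _ => sq_nonneg _)]

lemma dot_mulVec_le {m : Type*} [Fintype m] [DecidableEq m] (w : Matrix m m ℂ)
    (a b : EuclideanSpace ℂ m) :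
    ‖∑ j, (starRingEnd ℂ) (a j) * (w *ᵥ b) j‖ ≤ specNorm w * (‖a‖ * ‖b‖) := by
  have h : ∑ j, (starRingEnd ℂ) (a j) * (w *ᵥ b) j
      = (inner ℂ a (Matrix.toEuclideanCLM (𝕜 := ℂ) w b) : ℂ) := by
    rw [PiLp.inner_apply]
    exact Finset.sum_congr rfl fun j _ => by rw [RCLike.inner_apply']; rfl
  rw [h]
  calc ‖(inner ℂ a (Matrix.toEuclideanCLM (𝕜 := ℂ) w b) : ℂ)‖
      ≤ ‖a‖ * ‖Matrix.toEuclideanCLM (𝕜 := ℂ) w b‖ := norm_inner_le_norm _ _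
    _ ≤ ‖a‖ * (specNorm w * ‖b‖) := by
        gcongr
        exact (Matrix.toEuclideanCLM (𝕜 := ℂ) w).le_opNorm b
    _ = specNorm w * (‖a‖ * ‖b‖) := by ring


lemma proj_mulVec (η : ℕ) (φ : Config n → ℂ) (c' : Config n) :
    (projM n η *ᵥ φ) c' = if wt c' = η then φ c' else 0 := by
  classical
  simp only [projM, mulVec, dotProduct, of_apply]
  rw [Finset.sum_eq_single c']
  · by_cases h : wt c' = η
    · rw [if_pos ⟨rfl, h⟩, if_pos h, one_mul]
    · rw [if_neg (fun hc => h hc.2), if_neg h, zero_mul]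
  · intro b _ hb
    rw [if_neg (fun hc => hb hc.1.symm), zero_mul]
  · intro hmem; exact absurd (Finset.mem_univ _) hmem

lemma key (η : ℕ) (w : Matrix (Fin n) (Fin n) ℂ) (x y : Fock n) :
    ‖∑ c', (starRingEnd ℂ) (y c') *
        (((∑ j, ∑ k, w j k • (createM j * annM k)) * projM n η) *ᵥ x) c'‖
      ≤ specNorm w * η * (‖y‖ * ‖x‖) := by
  classical
  set x' : Config n → ℂ := fun c => if wt c = η then x c else 0 with hx'
  set y' : Config n → ℂ := fun c => if wt c = η then y c else 0 with hy'
  set u : Fin n → Config n → ℂ := fun j => annM j *ᵥ y' with hu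
  set v : Fin n → Config n → ℂ := fun k => annM k *ᵥ x' with hv
  have h0 : ∀ (ψ : Config n → ℂ) (s : Finset (Fin n))
      (F : Fin n → Matrix (Config n) (Config n) ℂ),
      (∑ j ∈ s, F j) *ᵥ ψ = ∑ j ∈ s, F j *ᵥ ψ :=
    fun ψ s F => map_sum (Matrix.mulVec.addMonoidHomLeft ψ) F s
  have hPx : projM n η *ᵥ x = x' := funext fun c => proj_mulVec η x c
  have hstep1 : ((∑ j, ∑ k, w j k • (createM j * annM k)) * projM n η) *ᵥ x
      = ∑ j, ∑ k, w j k • ((createM j * annM k) *ᵥ x') := by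
    rw [← Matrix.mulVec_mulVec, hPx, h0]
    refine Finset.sum_congr rfl fun j _ => ?_
    rw [h0]
    exact Finset.sum_congr rfl fun k _ => Matrix.smul_mulVec _ _ _
  have hzero : ∀ c', wt c' ≠ η →
      (∑ j, ∑ k, w j k • ((createM j * annM k) *ᵥ x')) c' = 0 := by
    intro c' h
    rw [Finset.sum_apply]
    refine Finset.sum_eq_zero fun j _ => ?_
    rw [Finset.sum_apply]
    refine Finset.sum_eq_zero fun k _ => ?_
    rw [Pi.smul_apply]
    have hz : ((createM j * annM k) *ᵥ x') c' = 0 := by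
      show ∑ c, (createM j * annM k) c' c * x' c = 0
      refine Finset.sum_eq_zero fun c _ => ?_
      by_cases hc : wt c = η
      · rw [CA_entry_ne j k (by rw [hc]; exact h), zero_mul]
      · rw [show x' c = 0 from if_neg hc, mul_zero]
    rw [hz, smul_zero]
  have h_jk : ∀ j k, ∑ c', (starRingEnd ℂ) (y' c') * ((createM j * annM k) *ᵥ x') c'
      = ∑ c, (starRingEnd ℂ) (u j c) * v k c := by
    intro j k
    rw [← Matrix.mulVec_mulVec]
    exact conj_dot_mulVec (createM j) y' (v k)
  have hS : ∑ c', (starRingEnd ℂ) (y c') *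
        (((∑ j, ∑ k, w j k • (createM j * annM k)) * projM n η) *ᵥ x) c'
      = ∑ c, ∑ j, (starRingEnd ℂ) (u j c) * (∑ k, w j k * v k c) := by
    rw [hstep1]
    have e0 : ∑ c', (starRingEnd ℂ) (y c') *
          (∑ j, ∑ k, w j k • ((createM j * annM k) *ᵥ x')) c'
        = ∑ c', (starRingEnd ℂ) (y' c') *
          (∑ j, ∑ k, w j k • ((createM j * annM k) *ᵥ x')) c' := by
      refine Finset.sum_congr rfl fun c' _ => ?_
      by_cases h : wt c' = η
      · rw [show y' c' = y c' from if_pos h]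
      · rw [hzero c' h, mul_zero, mul_zero]
    rw [e0]
    have e1 : ∑ c', (starRingEnd ℂ) (y' c') *
          (∑ j, ∑ k, w j k • ((createM j * annM k) *ᵥ x')) c'
        = ∑ j, ∑ k, ∑ c, w j k * ((starRingEnd ℂ) (u j c) * v k c) := by
      simp only [Finset.sum_apply, Pi.smul_apply, smul_eq_mul, Finset.mul_sum]
      rw [Finset.sum_comm]
      refine Finset.sum_congr rfl fun j _ => ?_
      rw [Finset.sum_comm]
      refine Finset.sum_congr rfl fun k _ => ?_
      calc ∑ c', (starRingEnd ℂ) (y' c') * (w j k * ((createM j * annM k) *ᵥ x') c')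
          = w j k * ∑ c', (starRingEnd ℂ) (y' c') * ((createM j * annM k) *ᵥ x') c' := by
            rw [Finset.mul_sum]
            exact Finset.sum_congr rfl fun c' _ => by ring
        _ = w j k * ∑ c, (starRingEnd ℂ) (u j c) * v k c := by rw [h_jk j k]
        _ = ∑ c, w j k * ((starRingEnd ℂ) (u j c) * v k c) := Finset.mul_sum _ _ _
    rw [e1]
    have e2 : ∀ j, ∑ k, ∑ c, w j k * ((starRingEnd ℂ) (u j c) * v k c)
        = ∑ c, (starRingEnd ℂ) (u j c) * ∑ k, w j k * v k c := by
      intro j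
      rw [Finset.sum_comm]
      refine Finset.sum_congr rfl fun c _ => ?_
      rw [Finset.mul_sum]
      exact Finset.sum_congr rfl fun k _ => by ring
    simp only [e2]
    rw [Finset.sum_comm]
  rw [hS]
  -- now bound
  have hterm : ∀ c : Config n,
      ‖∑ j, (starRingEnd ℂ) (u j c) * (∑ k, w j k * v k c)‖
        ≤ specNorm w * (‖((WithLp.equiv 2 _).symm fun j => u j c : EuclideanSpace ℂ (Fin n))‖
            * ‖((WithLp.equiv 2 _).symm fun k => v k c : EuclideanSpace ℂ (Fin n))‖) := by
    intro c
    exact dot_mulVec_le w ((WithLp.equiv 2 _).symm fun j => u j c)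
      ((WithLp.equiv 2 _).symm fun k => v k c)
  set F : Config n → ℝ :=
    fun c => ‖((WithLp.equiv 2 _).symm fun j => u j c : EuclideanSpace ℂ (Fin n))‖ with hF
  set G : Config n → ℝ :=
    fun c => ‖((WithLp.equiv 2 _).symm fun k => v k c : EuclideanSpace ℂ (Fin n))‖ with hG
  have hsum1 : ‖∑ c, ∑ j, (starRingEnd ℂ) (u j c) * (∑ k, w j k * v k c)‖
      ≤ specNorm w * ∑ c, F c * G c := by
    calc ‖∑ c, ∑ j, (starRingEnd ℂ) (u j c) * (∑ k, w j k * v k c)‖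
        ≤ ∑ c, ‖∑ j, (starRingEnd ℂ) (u j c) * (∑ k, w j k * v k c)‖ :=
          norm_sum_le _ _
      _ ≤ ∑ c, specNorm w * (F c * G c) := Finset.sum_le_sum fun c _ => hterm c
      _ = specNorm w * ∑ c, F c * G c := (Finset.mul_sum _ _ _).symm
  -- quadratic bounds
  have hFsq : ∑ c, (F c) ^ 2 ≤ (η : ℝ) * ‖y‖ ^ 2 := by
    have h1 : ∑ c, (F c) ^ 2 = ∑ j, ∑ c, ‖u j c‖ ^ 2 := by
      rw [Finset.sum_comm]
      exact Finset.sum_congr rfl fun c _ => eud_norm_sq _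
    rw [h1, hu]
    rw [total_sum_sq y']
    calc ∑ c, (wt c : ℝ) * ‖y' c‖ ^ 2 ≤ ∑ c, (η : ℝ) * ‖y c‖ ^ 2 := by
          refine Finset.sum_le_sum fun c _ => ?_
          by_cases h : wt c = η
          · rw [show y' c = y c from if_pos h, h]
          · rw [show y' c = 0 from if_neg h]
            simp only [norm_zero, ne_eq, OfNat.ofNat_ne_zero, not_false_eq_true,
              zero_pow, mul_zero, two_ne_zero]
            positivity
      _ = (η : ℝ) * ‖y‖ ^ 2 := by rw [← Finset.mul_sum, ← eud_norm_sq]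
  have hGsq : ∑ c, (G c) ^ 2 ≤ (η : ℝ) * ‖x‖ ^ 2 := by
    have h1 : ∑ c, (G c) ^ 2 = ∑ k, ∑ c, ‖v k c‖ ^ 2 := by
      rw [Finset.sum_comm]
      exact Finset.sum_congr rfl fun c _ => eud_norm_sq _
    rw [h1, hv]
    rw [total_sum_sq x']
    calc ∑ c, (wt c : ℝ) * ‖x' c‖ ^ 2 ≤ ∑ c, (η : ℝ) * ‖x c‖ ^ 2 := by
          refine Finset.sum_le_sum fun c _ => ?_
          by_cases h : wt c = η
          · rw [show x' c = x c from if_pos h, h]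
          · rw [show x' c = 0 from if_neg h]
            simp only [norm_zero, ne_eq, OfNat.ofNat_ne_zero, not_false_eq_true,
              zero_pow, mul_zero, two_ne_zero]
            positivity
      _ = (η : ℝ) * ‖x‖ ^ 2 := by rw [← Finset.mul_sum, ← eud_norm_sq]
  have hFGnn : (0:ℝ) ≤ ∑ c, F c * G c :=
    Finset.sum_nonneg fun c _ => mul_nonneg (norm_nonneg _) (norm_nonneg _)
  have hcs : (∑ c, F c * G c) ^ 2 ≤ ((η:ℝ) * ‖y‖^2) * ((η:ℝ) * ‖x‖^2) := by
    refine le_trans (Finset.sum_mul_sq_le_sq_mul_sq Finset.univ F G) ?_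
    exact mul_le_mul hFsq hGsq (Finset.sum_nonneg fun c _ => sq_nonneg _)
      (le_trans (Finset.sum_nonneg fun c _ => sq_nonneg _) hFsq)
  have hfinal : ∑ c, F c * G c ≤ (η : ℝ) * (‖y‖ * ‖x‖) := by
    refine (pow_le_pow_iff_left₀ hFGnn (by positivity) two_ne_zero).mp ?_
    calc (∑ c, F c * G c) ^ 2 ≤ ((η:ℝ) * ‖y‖^2) * ((η:ℝ) * ‖x‖^2) := hcs
      _ = ((η:ℝ) * (‖y‖ * ‖x‖)) ^ 2 := by ring
  calc ‖∑ c, ∑ j, (starRingEnd ℂ) (u j c) * (∑ k, w j k * v k c)‖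
      ≤ specNorm w * ∑ c, F c * G c := hsum1
    _ ≤ specNorm w * ((η : ℝ) * (‖y‖ * ‖x‖)) := by
        exact mul_le_mul_of_nonneg_left hfinal (norm_nonneg _)
    _ = specNorm w * η * (‖y‖ * ‖x‖) := by ring


lemma opnorm_key (η : ℕ) (w : Matrix (Fin n) (Fin n) ℂ) :
    specNorm ((∑ j, ∑ k, w j k • (createM j * annM k)) * projM n η)
      ≤ specNorm w * η := by
  have hC : (0:ℝ) ≤ specNorm w * η := mul_nonneg (norm_nonneg _) (Nat.cast_nonneg _)
  refine ContinuousLinearMap.opNorm_le_bound _ hC fun x => ?_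
  set M := (∑ j, ∑ k, w j k • (createM j * annM k)) * projM n η with hM
  set z : Fock n := Matrix.toEuclideanCLM (𝕜 := ℂ) M x with hz
  have hk := key η w x z
  have hSz : ∑ c', (starRingEnd ℂ) (z c') * (M *ᵥ x) c' = ((‖z‖ ^ 2 : ℝ) : ℂ) := by
    calc ∑ c', (starRingEnd ℂ) (z c') * (M *ᵥ x) c'
        = ∑ c', ((‖z c'‖ ^ 2 : ℝ) : ℂ) := by
          refine Finset.sum_congr rfl fun c' _ => ?_
          rw [show (M *ᵥ x) c' = z c' from rfl, RCLike.conj_mul]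
          norm_cast
      _ = ((∑ c', ‖z c'‖ ^ 2 : ℝ) : ℂ) := by push_cast; rfl
      _ = ((‖z‖ ^ 2 : ℝ) : ℂ) := by rw [eud_norm_sq]
  rw [hSz] at hk
  rw [Complex.norm_real, Real.norm_of_nonneg (sq_nonneg _)] at hk
  by_cases hz0 : ‖z‖ = 0
  · rw [show ‖Matrix.toEuclideanCLM (𝕜 := ℂ) M x‖ = ‖z‖ from rfl, hz0]
    positivity
  · have hpos : 0 < ‖z‖ := lt_of_le_of_ne (norm_nonneg z) (Ne.symm hz0)
    show ‖z‖ ≤ specNorm w * ↑η * ‖x‖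
    nlinarith [hk]

lemma maxNorm_nonneg {m : Type*} [Fintype m] (A : Matrix m m ℂ) : 0 ≤ maxNorm A :=
  Real.iSup_nonneg fun _ => Real.iSup_nonneg fun _ => norm_nonneg _

lemma entry_le_maxNorm {m : Type*} [Fintype m] (A : Matrix m m ℂ) (l i : m) :
    ‖A l i‖ ≤ maxNorm A := by
  refine le_trans (le_ciSup (f := fun j => ‖A l j‖)
    (Set.Finite.bddAbove (Set.finite_range _)) i) ?_
  exact le_ciSup (f := fun i => ⨆ j, ‖A i j‖)
    (Set.Finite.bddAbove (Set.finite_range _)) l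

lemma specNorm_mul_le {m : Type*} [Fintype m] [DecidableEq m] (A B : Matrix m m ℂ) :
    specNorm (A * B) ≤ specNorm A * specNorm B := by
  unfold specNorm
  rw [_root_.map_mul]
  exact norm_mul_le _ _

lemma specNorm_diagonal_le {m : Type*} [Fintype m] [DecidableEq m] (d : m → ℂ)
    (C : ℝ) (hC0 : 0 ≤ C) (hC : ∀ k, ‖d k‖ ≤ C) :
    specNorm (Matrix.diagonal d) ≤ C := by
  refine ContinuousLinearMap.opNorm_le_bound _ hC0 fun x => ?_
  have h1 : ‖Matrix.toEuclideanCLM (𝕜 := ℂ) (Matrix.diagonal d) x‖ ^ 2 ≤ (C * ‖x‖) ^ 2 := by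
    rw [eud_norm_sq]
    calc ∑ i, ‖(Matrix.toEuclideanCLM (𝕜 := ℂ) (Matrix.diagonal d) x) i‖ ^ 2
        = ∑ i, ‖d i * x i‖ ^ 2 := by
          refine Finset.sum_congr rfl fun i _ => ?_
          rw [show (Matrix.toEuclideanCLM (𝕜 := ℂ) (Matrix.diagonal d) x) i
            = (Matrix.diagonal d *ᵥ x) i from rfl, Matrix.mulVec_diagonal]
      _ ≤ ∑ i, C ^ 2 * ‖x i‖ ^ 2 := by
          refine Finset.sum_le_sum fun i _ => ?_
          rw [norm_mul, mul_pow]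
          gcongr
          exact hC i
      _ = C ^ 2 * ∑ i, ‖x i‖ ^ 2 := (Finset.mul_sum _ _ _).symm
      _ = (C * ‖x‖) ^ 2 := by rw [← eud_norm_sq]; ring
  exact (pow_le_pow_iff_left₀ (norm_nonneg _) (by positivity) two_ne_zero).mp h1

end FermiAux

/-- **Seminorm bound for `∑_{j,k} τ_{j,k} ν_{k,k} A_j† A_k`:**
`‖X‖_η ≤ ‖τ‖ ‖ν‖_max η`. -/


theorem fsem_bound_second_term {n η : ℕ}
    (τ ν : Matrix (Fin n) (Fin n) ℂ) :
    fsem η (∑ j, ∑ k, (τ j k * ν k k) • (createM j * annM k)) ≤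
      specNorm τ * maxNorm ν * (η : ℝ) := by
  set w : Matrix (Fin n) (Fin n) ℂ := τ * Matrix.diagonal (fun k => ν k k) with hw
  have hwe : (∑ j, ∑ k, (τ j k * ν k k) • (createM j * annM k))
      = ∑ j, ∑ k, w j k • (createM j * annM k) := by
    refine Finset.sum_congr rfl fun j _ => Finset.sum_congr rfl fun k _ => ?_
    rw [hw, Matrix.mul_diagonal]
  have hspec : specNorm w ≤ specNorm τ * maxNorm ν := by
    refine le_trans (FermiAux.specNorm_mul_le τ _) ?_
    refine mul_le_mul_of_nonneg_left ?_ (norm_nonneg _)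
    exact FermiAux.specNorm_diagonal_le _ _ (FermiAux.maxNorm_nonneg ν)
      fun k => FermiAux.entry_le_maxNorm ν k k
  calc fsem η (∑ j, ∑ k, (τ j k * ν k k) • (createM j * annM k))
      = specNorm ((∑ j, ∑ k, w j k • (createM j * annM k)) * projM n η) := by
        rw [fsem, hwe]
    _ ≤ specNorm w * η := FermiAux.opnorm_key η w
    _ ≤ (specNorm τ * maxNorm ν) * η := by
        refine mul_le_mul_of_nonneg_right hspec (Nat.cast_nonneg η)
    _ = specNorm τ * maxNorm ν * (η : ℝ) := rfl
end
end

section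
/- Let T = ∑_{j,k=0}^{n-1} A_j† A_k and V = ∑_{x,y=0}^{n/2-1} N_x N_y on the fermionic Fock space of n modes, n even, and let η ≤ n/2. Then the commutator [V,T], projected onto the span of the two states |ψ₀⟩ = |0 1^{η-1} 0^{n/2-η} 1 0^{n/2-1}⟩ and |ψ₁⟩ = |1 1^{η-1} 0^{n/2-η} 0 0^{n/2-1}⟩, equals (∑_{x=0}^{n/2-1} N_x)(A₀†A_{n/2} − A_{n/2}†A₀) + (A₀†A_{n/2} − A_{n/2}†A₀)(∑_{y=0}^{n/2-1} N_y), and consequently for the state |ψ_η⟩ = (|ψ₀⟩ + i|ψ₁⟩)/√2 one has |⟨ψ_η|[V,T]|ψ_η⟩| ≥ 2η − O(1); in particular ‖[V,T]‖_η = Ω(η). -/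
open Matrix
noncomputable section

/-- `T = ∑_{j,k=0}^{n-1} A_j†A_k`. -/
def Tall (n : ℕ) : Matrix (Config n) (Config n) ℂ :=
  ∑ j : Fin n, ∑ k : Fin n, createM j * annM k

/-- `V = ∑_{x,y=0}^{n/2-1} N_x N_y`. -/
def Vhalf (n : ℕ) : Matrix (Config n) (Config n) ℂ :=
  ∑ x : Fin n, ∑ y : Fin n,
    if (x : ℕ) < n / 2 ∧ (y : ℕ) < n / 2 then numM x * numM y else 0

/-- `∑_{x=0}^{n/2-1} N_x`. -/
def Nhalf (n : ℕ) : Matrix (Config n) (Config n) ℂ :=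
  ∑ x : Fin n, if (x : ℕ) < n / 2 then numM x else 0

/-- the configuration `|0 1^{η-1} 0⋯0 1 0⋯0⟩` (one at position `n/2`). -/
def conf0 (n η : ℕ) : Config n :=
  fun i => decide ((1 ≤ (i : ℕ) ∧ (i : ℕ) < η) ∨ (i : ℕ) = n / 2)

/-- the configuration `|1^η 0⋯0⟩`. -/
def conf1 (n η : ℕ) : Config n := fun i => decide ((i : ℕ) < η)

/-- the occupation basis vector of a configuration. -/
def basisVec {n : ℕ} (c : Config n) : Fock n := EuclideanSpace.single c 1

/-- orthogonal projection onto `span{|ψ₀⟩, |ψ₁⟩}`. -/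
def projTwo (n η : ℕ) : Matrix (Config n) (Config n) ℂ :=
  Matrix.of fun a b =>
    (if a = conf0 n η ∧ b = conf0 n η then 1 else 0) +
    (if a = conf1 n η ∧ b = conf1 n η then 1 else 0)

/-- the hopping operator `A₀†A_{n/2} − A_{n/2}†A₀`. -/
def hopM (n : ℕ) (h0 : 0 < n) : Matrix (Config n) (Config n) ℂ :=
  createM (⟨0, h0⟩ : Fin n) * annM (⟨n / 2, Nat.div_lt_self h0 one_lt_two⟩ : Fin n) -
  createM (⟨n / 2, Nat.div_lt_self h0 one_lt_two⟩ : Fin n) * annM (⟨0, h0⟩ : Fin n)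

/-- the state `(|ψ₀⟩ + i|ψ₁⟩)/√2`. -/
def psiEta (n η : ℕ) : Fock n :=
  ((Real.sqrt 2 : ℂ))⁻¹ • (basisVec (conf0 n η) + Complex.I • basisVec (conf1 n η))


open Finset in
lemma annM_apply {n : ℕ} (k : Fin n) (d b : Config n) :
    annM k d b = if d k = false ∧ b = Function.update d k true then signFactor k d else 0 := by
  simp only [annM, conjTranspose_apply, createM, of_apply]
  split
  · simp [signFactor]
  · simp

lemma signFactor_sq {n : ℕ} (j : Fin n) (c : Config n) :
    signFactor j c * signFactor j c = 1 := by
  simp [signFactor, ← pow_add, Even.neg_one_pow ⟨_, rfl⟩]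

open Finset in
lemma createM_mul_annM_apply {n : ℕ} (j k : Fin n) (a b : Config n) :
    (createM j * annM k) a b =
      if b k = true ∧ (Function.update b k false) j = false ∧
         a = Function.update (Function.update b k false) j true
      then signFactor j (Function.update b k false) * signFactor k (Function.update b k false)
      else 0 := by
  rw [Matrix.mul_apply]
  rw [Finset.sum_eq_single (Function.update b k false)]
  · rw [annM_apply, createM]
    simp only [of_apply, Function.update_self]
    by_cases hbk : b k = true
    · have hb : b = Function.update (Function.update b k false) k true := by
        funext i
        rcases eq_or_ne i k with rfl | hik
        · simp [hbk]
        · simp [Function.update_of_ne hik]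
      simp only [hbk, ← hb, true_and, and_true, if_true]
      split <;> [rw [mul_comm]; rw [zero_mul]]
    · have hb : b ≠ Function.update (Function.update b k false) k true := by
        intro h; apply hbk; rw [h]; simp
      simp [hb, hbk]
  · intro d _ hd
    rw [annM_apply]
    rcases eq_or_ne (d k) false with hdk | hdk
    · rcases eq_or_ne b (Function.update d k true) with hb | hb
      · exfalso; apply hd; rw [hb]
        funext i
        rcases eq_or_ne i k with rfl | hik
        · simp [hdk]
        · simp [Function.update_of_ne hik]
      · simp [hb]
    · simp [hdk]
  · simp

lemma numM_apply {n : ℕ} (j : Fin n) (a b : Config n) :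
    numM j a b = if a = b ∧ b j = true then 1 else 0 := by
  rw [numM, createM_mul_annM_apply]
  by_cases hbj : b j = true
  · have hb : Function.update (Function.update b j false) j true = b := by
      funext i
      rcases eq_or_ne i j with rfl | hij
      · simp [hbj]
      · simp [Function.update_of_ne hij]
    simp [hbj, hb, signFactor_sq, and_comm]
  · simp [hbj]

/-- number of occupied modes in the first half -/
def nuH {n : ℕ} (c : Config n) : ℕ :=
  (Finset.univ.filter fun x : Fin n => (x : ℕ) < n / 2 ∧ c x = true).card

open Finset in
lemma Nhalf_eq_diagonal (n : ℕ) :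
    Nhalf n = Matrix.diagonal fun c : Config n => (nuH c : ℂ) := by
  ext a b
  rw [Nhalf]
  simp only [Matrix.sum_apply]
  rcases eq_or_ne a b with rfl | hab
  · rw [Matrix.diagonal_apply_eq, nuH]
    rw [Finset.card_filter]
    push_cast
    rw [Finset.sum_congr rfl]
    intro x _
    by_cases hx : (x : ℕ) < n / 2
    · simp [hx, numM_apply]
    · simp [hx]
  · rw [Matrix.diagonal_apply_ne _ hab]
    apply Finset.sum_eq_zero
    intro x _
    by_cases hx : (x : ℕ) < n / 2 <;> simp [hx, numM_apply, hab]

open Finset in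
lemma Vhalf_eq (n : ℕ) : Vhalf n = Nhalf n * Nhalf n := by
  rw [Vhalf, Nhalf, Finset.sum_mul_sum]
  apply Finset.sum_congr rfl; intro x _
  apply Finset.sum_congr rfl; intro y _
  by_cases hx : (x : ℕ) < n / 2 <;> by_cases hy : (y : ℕ) < n / 2 <;>
    simp [hx, hy]

lemma commVT_apply (n : ℕ) (a b : Config n) :
    ⁅Vhalf n, Tall n⁆ a b = ((nuH a : ℂ)^2 - (nuH b : ℂ)^2) * Tall n a b := by
  rw [Ring.lie_def, Vhalf_eq, Nhalf_eq_diagonal, Matrix.diagonal_mul_diagonal]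
  rw [Matrix.sub_apply, Matrix.diagonal_mul, Matrix.mul_diagonal]
  ring

open Finset in
lemma card_val_filter (n a b : ℕ) (hb : b ≤ n)
    (p : Fin n → Prop) [DecidablePred p] (hp : ∀ k : Fin n, p k ↔ a ≤ (k:ℕ) ∧ (k:ℕ) < b) :
    (Finset.univ.filter p).card = b - a := by
  rw [← Nat.card_Ico a b]
  refine Finset.card_bij (fun k _ => (k : ℕ)) ?_ ?_ ?_
  · intro k hk
    simp only [Finset.mem_filter, Finset.mem_univ, true_and, hp] at hk
    simpa [Finset.mem_Ico] using hk
  · intro k hk k' hk' h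
    exact Fin.ext h
  · intro m hm
    simp only [Finset.mem_Ico] at hm
    exact ⟨⟨m, lt_of_lt_of_le hm.2 hb⟩, by simp [hp, hm.1, hm.2], rfl⟩

/-- the common core configuration `|0 1^{η-1} 0 ⋯ 0⟩` -/
def dcore (n η : ℕ) : Config n := fun i => decide (1 ≤ (i : ℕ) ∧ (i : ℕ) < η)

section Configs

variable {n η : ℕ} (h0 : 0 < n) (hη : 0 < η) (hs : η ≤ n / 2)
include h0 hη hs
set_option linter.unusedSectionVars false

lemma conf_ne : conf0 n η ≠ conf1 n η := by
  intro h
  have := congrFun h ⟨0, h0⟩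
  simp [conf0, conf1, hη] at this
  omega

lemma update_conf0 :
    Function.update (conf0 n η) (⟨n / 2, Nat.div_lt_self h0 one_lt_two⟩ : Fin n) false
      = dcore n η := by
  funext i
  rcases eq_or_ne i ⟨n / 2, Nat.div_lt_self h0 one_lt_two⟩ with rfl | hi
  · simp [dcore]; omega
  · rw [Function.update_of_ne hi]
    have : (i : ℕ) ≠ n / 2 := fun h => hi (Fin.ext h)
    simp [conf0, dcore, this]

lemma update_conf1 :
    Function.update (conf1 n η) (⟨0, h0⟩ : Fin n) false = dcore n η := by
  funext i
  rcases eq_or_ne i ⟨0, h0⟩ with rfl | hi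
  · simp [dcore]
  · rw [Function.update_of_ne hi]
    have : (i : ℕ) ≠ 0 := fun h => hi (Fin.ext h)
    simp [conf1, dcore]; omega

lemma update_dcore0 :
    Function.update (dcore n η) (⟨0, h0⟩ : Fin n) true = conf1 n η := by
  funext i
  rcases eq_or_ne i ⟨0, h0⟩ with rfl | hi
  · simp [conf1, hη]
  · rw [Function.update_of_ne hi]
    have : (i : ℕ) ≠ 0 := fun h => hi (Fin.ext h)
    simp [conf1, dcore]; omega

lemma update_dcore1 :
    Function.update (dcore n η) (⟨n / 2, Nat.div_lt_self h0 one_lt_two⟩ : Fin n) true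
      = conf0 n η := by
  funext i
  rcases eq_or_ne i ⟨n / 2, Nat.div_lt_self h0 one_lt_two⟩ with rfl | hi
  · simp [conf0]
  · rw [Function.update_of_ne hi]
    have : (i : ℕ) ≠ n / 2 := fun h => hi (Fin.ext h)
    simp [conf0, dcore, this]

lemma signFactor_zero (c : Config n) : signFactor (⟨0, h0⟩ : Fin n) c = 1 := by
  rw [signFactor]
  have : (Finset.univ.filter fun k : Fin n => k < (⟨0, h0⟩ : Fin n) ∧ c k = true) = ∅ := by
    apply Finset.filter_false_of_mem
    intro k _ hk
    exact absurd hk.1 (by simp [Fin.lt_def])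
  simp [this]

lemma signFactor_half :
    signFactor (⟨n / 2, Nat.div_lt_self h0 one_lt_two⟩ : Fin n) (dcore n η)
      = (-1 : ℂ) ^ (η - 1) := by
  rw [signFactor]
  congr 1
  apply card_val_filter n 1 η (le_trans hs (Nat.div_le_self n 2))
  intro k
  simp only [Fin.lt_def, dcore, decide_eq_true_eq]
  constructor
  · rintro ⟨-, h2⟩; exact h2
  · rintro ⟨h1, h2⟩; exact ⟨lt_of_lt_of_le h2 hs, h1, h2⟩

lemma nuH_conf0 : nuH (conf0 n η) = η - 1 := by
  apply card_val_filter n 1 η (le_trans hs (Nat.div_le_self n 2))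
  intro k
  simp only [conf0, decide_eq_true_eq]
  constructor
  · rintro ⟨hk, h | h⟩
    · exact h
    · omega
  · rintro ⟨h1, h2⟩; exact ⟨lt_of_lt_of_le h2 hs, Or.inl ⟨h1, h2⟩⟩

lemma nuH_conf1 : nuH (conf1 n η) = η := by
  have := card_val_filter n 0 η (le_trans hs (Nat.div_le_self n 2))
    (fun k : Fin n => (k : ℕ) < n / 2 ∧ conf1 n η k = true) ?_
  · simpa [nuH] using this
  · intro k
    simp only [conf1, decide_eq_true_eq]
    constructor
    · rintro ⟨-, h⟩; exact ⟨Nat.zero_le _, h⟩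
    · rintro ⟨-, h⟩; exact ⟨lt_of_lt_of_le h hs, h⟩

lemma wt_conf1 : wt (conf1 n η) = η := by
  have := card_val_filter n 0 η (le_trans hs (Nat.div_le_self n 2))
    (fun k : Fin n => conf1 n η k = true) ?_
  · simpa [wt] using this
  · intro k; simp only [conf1, decide_eq_true_eq]
    exact ⟨fun h => ⟨Nat.zero_le _, h⟩, fun h => h.2⟩

open Finset in
lemma wt_conf0 : wt (conf0 n η) = η := by
  rw [wt]
  have hsplit : (Finset.univ.filter fun k : Fin n => conf0 n η k = true)
      = (Finset.univ.filter fun k : Fin n => 1 ≤ (k:ℕ) ∧ (k:ℕ) < η) ∪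
        {(⟨n / 2, Nat.div_lt_self h0 one_lt_two⟩ : Fin n)} := by
    ext k
    simp only [Finset.mem_filter, Finset.mem_union, Finset.mem_singleton, Finset.mem_univ,
      true_and, conf0, decide_eq_true_eq, Fin.ext_iff]
  rw [hsplit, Finset.card_union_of_disjoint, card_val_filter n 1 η
    (le_trans hs (Nat.div_le_self n 2)) _ (fun k => Iff.rfl)]
  · simp; omega
  · rw [Finset.disjoint_singleton_right]
    simp only [Finset.mem_filter, Finset.mem_univ, true_and]
    omega

end Configs

section Entries

variable {n η : ℕ} (h0 : 0 < n) (hη : 0 < η) (hs : η ≤ n / 2)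
include h0 hη hs
set_option linter.unusedSectionVars false

lemma T_term_10 (j k : Fin n) (hjk : ¬((j : ℕ) = 0 ∧ (k : ℕ) = n / 2)) :
    (createM j * annM k) (conf1 n η) (conf0 n η) = 0 := by
  rw [createM_mul_annM_apply, if_neg]
  rintro ⟨hk1, hk2, heq⟩
  by_cases hj : j = k
  · subst hj
    have hre : Function.update (Function.update (conf0 n η) j false) j true = conf0 n η := by
      funext i
      rcases eq_or_ne i j with rfl | hi
      · simp [hk1]
      · simp [Function.update_of_ne hi]
    rw [hre] at heq
    exact conf_ne h0 hη hs heq.symm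
  · have e1 : conf1 n η j = true := by rw [heq]; simp
    have e2 : conf1 n η k = false := by
      rw [heq, Function.update_of_ne (Ne.symm hj), Function.update_self]
    have e3 : conf0 n η j = false := by rwa [Function.update_of_ne hj] at hk2
    simp only [conf0, conf1, decide_eq_true_eq, decide_eq_false_iff_not] at e1 e2 e3 hk1
    exact hjk ⟨by omega, by omega⟩

lemma T_term_01 (j k : Fin n) (hjk : ¬((j : ℕ) = n / 2 ∧ (k : ℕ) = 0)) :
    (createM j * annM k) (conf0 n η) (conf1 n η) = 0 := by
  rw [createM_mul_annM_apply, if_neg]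
  rintro ⟨hk1, hk2, heq⟩
  by_cases hj : j = k
  · subst hj
    have hre : Function.update (Function.update (conf1 n η) j false) j true = conf1 n η := by
      funext i
      rcases eq_or_ne i j with rfl | hi
      · simp [hk1]
      · simp [Function.update_of_ne hi]
    rw [hre] at heq
    exact conf_ne h0 hη hs heq
  · have e1 : conf0 n η j = true := by rw [heq]; simp
    have e2 : conf0 n η k = false := by
      rw [heq, Function.update_of_ne (Ne.symm hj), Function.update_self]
    have e3 : conf1 n η j = false := by rwa [Function.update_of_ne hj] at hk2
    simp only [conf0, conf1, decide_eq_true_eq, decide_eq_false_iff_not] at e1 e2 e3 hk1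
    exact hjk ⟨by omega, by omega⟩

lemma term_main_10 :
    (createM (⟨0, h0⟩ : Fin n) * annM (⟨n / 2, Nat.div_lt_self h0 one_lt_two⟩ : Fin n))
      (conf1 n η) (conf0 n η) = (-1 : ℂ) ^ (η - 1) := by
  rw [createM_mul_annM_apply, update_conf0 h0 hη hs, if_pos, signFactor_zero h0 hη hs,
    signFactor_half h0 hη hs, one_mul]
  refine ⟨by simp [conf0], by simp [dcore], (update_dcore0 h0 hη hs).symm⟩

lemma term_main_01 :
    (createM (⟨n / 2, Nat.div_lt_self h0 one_lt_two⟩ : Fin n) * annM (⟨0, h0⟩ : Fin n))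
      (conf0 n η) (conf1 n η) = (-1 : ℂ) ^ (η - 1) := by
  rw [createM_mul_annM_apply, update_conf1 h0 hη hs, if_pos, signFactor_zero h0 hη hs,
    signFactor_half h0 hη hs, mul_one]
  refine ⟨by simp [conf1, hη], by simp [dcore]; omega, (update_dcore1 h0 hη hs).symm⟩

lemma Tall_c1_c0 : Tall n (conf1 n η) (conf0 n η) = (-1 : ℂ) ^ (η - 1) := by
  rw [Tall]
  simp only [Matrix.sum_apply]
  rw [Finset.sum_eq_single (⟨0, h0⟩ : Fin n)]
  rotate_left
  · intro j _ hj
    apply Finset.sum_eq_zero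
    intro k _
    refine T_term_10 h0 hη hs j k fun hc => hj (Fin.ext hc.1)
  · simp
  rw [Finset.sum_eq_single (⟨n / 2, Nat.div_lt_self h0 one_lt_two⟩ : Fin n)]
  rotate_left
  · intro k _ hk
    refine T_term_10 h0 hη hs _ k fun hc => hk (Fin.ext hc.2)
  · simp
  exact term_main_10 h0 hη hs

lemma Tall_c0_c1 : Tall n (conf0 n η) (conf1 n η) = (-1 : ℂ) ^ (η - 1) := by
  rw [Tall]
  simp only [Matrix.sum_apply]
  rw [Finset.sum_eq_single (⟨n / 2, Nat.div_lt_self h0 one_lt_two⟩ : Fin n)]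
  rotate_left
  · intro j _ hj
    apply Finset.sum_eq_zero
    intro k _
    refine T_term_01 h0 hη hs j k fun hc => hj (Fin.ext hc.1)
  · simp
  rw [Finset.sum_eq_single (⟨0, h0⟩ : Fin n)]
  rotate_left
  · intro k _ hk
    refine T_term_01 h0 hη hs _ k fun hc => hk (Fin.ext hc.2)
  · simp
  exact term_main_01 h0 hη hs

lemma hop_c1_c0 : hopM n h0 (conf1 n η) (conf0 n η) = (-1 : ℂ) ^ (η - 1) := by
  rw [hopM, Matrix.sub_apply, term_main_10 h0 hη hs,
    T_term_10 h0 hη hs _ _ (by simp; omega), sub_zero]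

lemma hop_c0_c1 : hopM n h0 (conf0 n η) (conf1 n η) = -(-1 : ℂ) ^ (η - 1) := by
  rw [hopM, Matrix.sub_apply, term_main_01 h0 hη hs,
    T_term_01 h0 hη hs _ _ (by simp; omega), zero_sub]

lemma hop_term_diag {j k : Fin n} (hjk : (j : ℕ) ≠ (k : ℕ)) (c : Config n) :
    (createM j * annM k) c c = 0 := by
  rw [createM_mul_annM_apply, if_neg]
  rintro ⟨hk1, -, heq⟩
  have := congrFun heq k
  rw [Function.update_of_ne (fun h => hjk (congrArg Fin.val h.symm)), Function.update_self] at this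
  rw [hk1] at this
  exact Bool.noConfusion this

lemma hop_diag0 : hopM n h0 (conf0 n η) (conf0 n η) = 0 := by
  rw [hopM, Matrix.sub_apply, hop_term_diag h0 hη hs (by simp; omega),
    hop_term_diag h0 hη hs (by simp; omega), sub_zero]

lemma hop_diag1 : hopM n h0 (conf1 n η) (conf1 n η) = 0 := by
  rw [hopM, Matrix.sub_apply, hop_term_diag h0 hη hs (by simp; omega),
    hop_term_diag h0 hη hs (by simp; omega), sub_zero]

end Entries

section ProjTwo

variable {n η : ℕ}

lemma projTwo_mul (X : Matrix (Config n) (Config n) ℂ) (a b : Config n) :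
    (projTwo n η * X) a b =
      (if a = conf0 n η then X (conf0 n η) b else 0) +
      (if a = conf1 n η then X (conf1 n η) b else 0) := by
  rw [Matrix.mul_apply]
  have h : ∀ d, projTwo n η a d * X d b =
      (if d = conf0 n η then (if a = conf0 n η then X (conf0 n η) b else 0) else 0) +
      (if d = conf1 n η then (if a = conf1 n η then X (conf1 n η) b else 0) else 0) := by
    intro d
    simp only [projTwo, Matrix.of_apply, add_mul, ite_mul, one_mul, zero_mul]
    congr 1 <;> split_ifs <;> simp_all
  rw [Finset.sum_congr rfl fun d _ => h d, Finset.sum_add_distrib,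
    Finset.sum_ite_eq' Finset.univ (conf0 n η), Finset.sum_ite_eq' Finset.univ (conf1 n η)]
  simp

lemma mul_projTwo (X : Matrix (Config n) (Config n) ℂ) (a b : Config n) :
    (X * projTwo n η) a b =
      (if b = conf0 n η then X a (conf0 n η) else 0) +
      (if b = conf1 n η then X a (conf1 n η) else 0) := by
  rw [Matrix.mul_apply]
  have h : ∀ d, X a d * projTwo n η d b =
      (if d = conf0 n η then (if b = conf0 n η then X a (conf0 n η) else 0) else 0) +
      (if d = conf1 n η then (if b = conf1 n η then X a (conf1 n η) else 0) else 0) := by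
    intro d
    simp only [projTwo, Matrix.of_apply, mul_add, mul_ite, mul_one, mul_zero]
    congr 1 <;> split_ifs <;> simp_all
  rw [Finset.sum_congr rfl fun d _ => h d, Finset.sum_add_distrib,
    Finset.sum_ite_eq' Finset.univ (conf0 n η), Finset.sum_ite_eq' Finset.univ (conf1 n η)]
  simp

lemma sandwich (X Y : Matrix (Config n) (Config n) ℂ)
    (e00 : X (conf0 n η) (conf0 n η) = Y (conf0 n η) (conf0 n η))
    (e01 : X (conf0 n η) (conf1 n η) = Y (conf0 n η) (conf1 n η))
    (e10 : X (conf1 n η) (conf0 n η) = Y (conf1 n η) (conf0 n η))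
    (e11 : X (conf1 n η) (conf1 n η) = Y (conf1 n η) (conf1 n η)) :
    projTwo n η * X * projTwo n η = projTwo n η * Y * projTwo n η := by
  ext a b
  rw [Matrix.mul_assoc, Matrix.mul_assoc, projTwo_mul, projTwo_mul,
    mul_projTwo, mul_projTwo, mul_projTwo, mul_projTwo]
  split_ifs <;> simp_all

end ProjTwo

lemma part1 {n η : ℕ} (h0 : 0 < n) (hη : 0 < η) (hs : η ≤ n / 2) :
    projTwo n η * ⁅Vhalf n, Tall n⁆ * projTwo n η =
      projTwo n η * (Nhalf n * hopM n h0 + hopM n h0 * Nhalf n) * projTwo n η := by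
  have hY : ∀ a b : Config n, (Nhalf n * hopM n h0 + hopM n h0 * Nhalf n) a b =
      (nuH a : ℂ) * hopM n h0 a b + hopM n h0 a b * (nuH b : ℂ) := by
    intro a b
    rw [Matrix.add_apply, Nhalf_eq_diagonal, Matrix.diagonal_mul, Matrix.mul_diagonal]
  have hcast : ((η - 1 : ℕ) : ℂ) = (η : ℂ) - 1 := by
    push_cast [Nat.cast_sub hη]; ring
  apply sandwich
  · rw [commVT_apply, hY, hop_diag0 h0 hη hs]; ring
  · rw [commVT_apply, hY, hop_c0_c1 h0 hη hs, Tall_c0_c1 h0 hη hs,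
      nuH_conf0 h0 hη hs, nuH_conf1 h0 hη hs, hcast]
    ring
  · rw [commVT_apply, hY, hop_c1_c0 h0 hη hs, Tall_c1_c0 h0 hη hs,
      nuH_conf0 h0 hη hs, nuH_conf1 h0 hη hs, hcast]
    ring
  · rw [commVT_apply, hY, hop_diag1 h0 hη hs]; ring

lemma inner_basis_appM {n : ℕ} (A : Matrix (Config n) (Config n) ℂ) (a b : Config n) :
    (inner ℂ (basisVec a) (appM A (basisVec b)) : ℂ) = A a b := by
  have happ : appM A (basisVec b)
      = WithLp.toLp 2 (Matrix.toLin' A (Pi.single b 1)) := by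
    simp only [appM, basisVec, EuclideanSpace.single, ← PiLp.toLp_single,
      Matrix.toEuclideanCLM_toLp, Matrix.toLin'_apply]
  rw [happ, Matrix.toLin'_apply, Matrix.mulVec_single, basisVec,
    EuclideanSpace.inner_single_left]
  simp

lemma inner_psi {n η : ℕ} (M : Matrix (Config n) (Config n) ℂ) :
    (inner ℂ (psiEta n η) (appM M (psiEta n η)) : ℂ) =
      (2 : ℂ)⁻¹ * ((M (conf0 n η) (conf0 n η) + M (conf1 n η) (conf1 n η)) +
        Complex.I * M (conf0 n η) (conf1 n η) - Complex.I * M (conf1 n η) (conf0 n η)) := by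
  have hin : (inner ℂ (psiEta n η) (appM M (psiEta n η)) : ℂ) =
      (2 : ℂ)⁻¹ * inner ℂ (basisVec (conf0 n η) + Complex.I • basisVec (conf1 n η))
        (appM M (basisVec (conf0 n η) + Complex.I • basisVec (conf1 n η))) := by
    rw [psiEta, _root_.map_smul, inner_smul_left, inner_smul_right, map_inv₀,
      Complex.conj_ofReal, ← mul_assoc, ← mul_inv, ← Complex.ofReal_mul,
      Real.mul_self_sqrt (by norm_num)]
    congr 1
  rw [hin]
  simp only [map_add, _root_.map_smul, inner_add_left, inner_add_right, inner_smul_left,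
    inner_smul_right, inner_basis_appM, Complex.conj_I]
  ring_nf
  rw [Complex.I_sq]
  ring

section Final

variable {n η : ℕ} (h0 : 0 < n) (hη : 0 < η) (hs : η ≤ n / 2)
include h0 hη hs
set_option linter.unusedSectionVars false

lemma inner_comm_val :
    (inner ℂ (psiEta n η) (appM ⁅Vhalf n, Tall n⁆ (psiEta n η)) : ℂ)
      = -(Complex.I * (2 * (η : ℂ) - 1) * (-1 : ℂ) ^ (η - 1)) := by
  rw [inner_psi, commVT_apply, commVT_apply, commVT_apply, commVT_apply,
    Tall_c0_c1 h0 hη hs, Tall_c1_c0 h0 hη hs, nuH_conf0 h0 hη hs, nuH_conf1 h0 hη hs]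
  have hcast : ((η - 1 : ℕ) : ℂ) = (η : ℂ) - 1 := by push_cast [Nat.cast_sub hη]; ring
  rw [hcast]
  ring

lemma mul_projM_apply (X : Matrix (Config n) (Config n) ℂ) (a b : Config n)
    (hb : wt b = η) : (X * projM n η) a b = X a b := by
  rw [Matrix.mul_apply, Finset.sum_eq_single b]
  · simp [projM, hb]
  · intro d _ hd
    simp [projM, hd]
  · simp

lemma inner_commP_val :
    (inner ℂ (psiEta n η) (appM (⁅Vhalf n, Tall n⁆ * projM n η) (psiEta n η)) : ℂ)
      = -(Complex.I * (2 * (η : ℂ) - 1) * (-1 : ℂ) ^ (η - 1)) := by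
  rw [inner_psi,
    mul_projM_apply h0 hη hs _ _ _ (wt_conf0 h0 hη hs),
    mul_projM_apply h0 hη hs _ _ _ (wt_conf1 h0 hη hs),
    mul_projM_apply h0 hη hs _ _ _ (wt_conf1 h0 hη hs),
    mul_projM_apply h0 hη hs _ _ _ (wt_conf0 h0 hη hs),
    ← inner_psi]
  exact inner_comm_val h0 hη hs

lemma val_norm : ‖-(Complex.I * (2 * (η : ℂ) - 1) * (-1 : ℂ) ^ (η - 1))‖
    = 2 * (η : ℝ) - 1 := by
  rw [norm_neg, norm_mul, norm_mul, Complex.norm_I, one_mul, norm_pow, norm_neg, norm_one,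
    one_pow, mul_one]
  have h : (2 * (η : ℂ) - 1) = ((2 * (η : ℝ) - 1 : ℝ) : ℂ) := by push_cast; ring
  have h1 : (1 : ℝ) ≤ (η : ℝ) := by exact_mod_cast hη
  rw [h, Complex.norm_real, Real.norm_eq_abs, abs_of_nonneg (by linarith)]

lemma norm_psiEta : ‖psiEta n η‖ = 1 := by
  have hne := conf_ne h0 hη hs
  have h1 : (inner ℂ (psiEta n η) (psiEta n η) : ℂ) = 1 := by
    have h := inner_psi (n := n) (η := η) (1 : Matrix (Config n) (Config n) ℂ)
    simp only [appM, _root_.map_one, ContinuousLinearMap.one_apply] at h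
    rw [h, Matrix.one_apply_eq, Matrix.one_apply_eq, Matrix.one_apply_ne hne,
      Matrix.one_apply_ne (Ne.symm hne)]
    ring
  have h2 := @inner_self_eq_norm_sq ℂ _ _ _ _ (psiEta n η)
  have h3 : ‖psiEta n η‖ ^ 2 = 1 := by rw [← h2, h1]; simp
  nlinarith [norm_nonneg (psiEta n η)]

end Final

/-- **Tightness: lower bound for `‖[V,T]‖_η`.** Projected onto the span of
`|ψ₀⟩, |ψ₁⟩`, the commutator `[V,T]` equals
`(∑_{x<n/2} N_x)(A₀†A_{n/2} − A_{n/2}†A₀) + (A₀†A_{n/2} − A_{n/2}†A₀)(∑_{y<n/2} N_y)`;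
consequently `|⟨ψ_η|[V,T]|ψ_η⟩| ≥ 2η − O(1)`, and `‖[V,T]‖_η = Ω(η)`. -/
theorem commutator_VT_lower_bound :
    ∃ C c C' : ℝ, 0 < c ∧
      ∀ (n η : ℕ) (h0 : 0 < n), Even n → 0 < η → η ≤ n / 2 →
        (projTwo n η * ⁅Vhalf n, Tall n⁆ * projTwo n η =
          projTwo n η * (Nhalf n * hopM n h0 + hopM n h0 * Nhalf n) * projTwo n η) ∧
        2 * (η : ℝ) - C ≤
          ‖(inner ℂ (psiEta n η) (appM ⁅Vhalf n, Tall n⁆ (psiEta n η)) : ℂ)‖ ∧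
        c * (η : ℝ) - C' ≤ fsem η ⁅Vhalf n, Tall n⁆ := by
  refine ⟨1, 2, 1, by norm_num, ?_⟩
  intro n η h0 _hev hη hs
  refine ⟨part1 h0 hη hs, ?_, ?_⟩
  · rw [inner_comm_val h0 hη hs, val_norm h0 hη hs]
  · have hPnorm : ‖(inner ℂ (psiEta n η)
        (appM (⁅Vhalf n, Tall n⁆ * projM n η) (psiEta n η)) : ℂ)‖ = 2 * (η : ℝ) - 1 := by
      rw [inner_commP_val h0 hη hs, val_norm h0 hη hs]
    have hb : ‖(inner ℂ (psiEta n η) (appM (⁅Vhalf n, Tall n⁆ * projM n η) (psiEta n η)) : ℂ)‖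
        ≤ fsem η ⁅Vhalf n, Tall n⁆ := by
      calc ‖(inner ℂ (psiEta n η) (appM (⁅Vhalf n, Tall n⁆ * projM n η) (psiEta n η)) : ℂ)‖
          ≤ ‖psiEta n η‖ * ‖appM (⁅Vhalf n, Tall n⁆ * projM n η) (psiEta n η)‖ :=
            norm_inner_le_norm _ _
        _ ≤ ‖psiEta n η‖ * (‖appM (⁅Vhalf n, Tall n⁆ * projM n η)‖ * ‖psiEta n η‖) :=
            mul_le_mul_of_nonneg_left
              (ContinuousLinearMap.le_opNorm _ _) (norm_nonneg _)
        _ = fsem η ⁅Vhalf n, Tall n⁆ := by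
            rw [norm_psiEta h0 hη hs]
            simp [fsem, specNorm, appM]
    linarith [hb, hPnorm]
end
end
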